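/- Let S be the zero-union of finite semigroups S₁, …, Sₙ with at least two of them non-commutative. Then the commuting graph of S is connected with diameter exactly 2. -/

import Mathlib

open SimpleGraph

/-- The center of a magma/semigroup: elements commuting with everything. -/
def sgCenter (S : Type*) [Mul S] : Set S := {x | ∀ y, x * y = y * x}

/-- The commuting graph of a semigroup: vertices are non-central elements,
distinct vertices adjacent iff they commute. -/
def commGraph (S : Type*) [Mul S] : SimpleGraph {x : S // x ∉ sgCenter S} where
  Adj x y := x ≠ y ∧ (x : S) * y = (y : S) * x
  symm := ⟨fun x y ⟨h, h'⟩ => ⟨h.symm, h'.symm⟩⟩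
  loopless := ⟨fun x ⟨h, _⟩ => h rfl⟩

/-- The extended commuting graph of a semigroup: vertices are all elements,
distinct vertices adjacent iff they commute. -/
def extCommGraph (S : Type*) [Mul S] : SimpleGraph S where
  Adj x y := x ≠ y ∧ x * y = y * x
  symm := ⟨fun x y ⟨h, h'⟩ => ⟨h.symm, h'.symm⟩⟩
  loopless := ⟨fun x ⟨h, _⟩ => h rfl⟩

/-- The graph join of two graphs on disjoint vertex sets. -/
def graphJoin {V W : Type*} (G : SimpleGraph V) (H : SimpleGraph W) :
    SimpleGraph (V ⊕ W) where
  Adj x y := match x, y with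
    | .inl a, .inl b => G.Adj a b
    | .inr a, .inr b => H.Adj a b
    | .inl _, .inr _ => True
    | .inr _, .inl _ => True
  symm := by constructor; rintro (a|a) (b|b) h <;> simp_all [SimpleGraph.Adj.symm]
  loopless := by constructor; rintro (a|a) h; exacts [G.loopless.irrefl a h, H.loopless.irrefl a h]

/-- The graph join of a family of graphs on disjoint vertex sets. -/
def graphJoinFam {ι : Type*} {V : ι → Type*} (G : ∀ i, SimpleGraph (V i)) :
    SimpleGraph (Σ i, V i) where
  Adj x y := x.1 ≠ y.1 ∨ ∃ a b : V x.1, (G x.1).Adj a b ∧ x = ⟨x.1, a⟩ ∧ y = ⟨x.1, b⟩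
  symm := by
    constructor
    rintro ⟨i, a⟩ ⟨j, b⟩ (h | ⟨a', b', hadj, h1, h2⟩)
    · exact Or.inl h.symm
    · cases h1; cases h2
      exact Or.inr ⟨b', a, hadj.symm, rfl, rfl⟩
  loopless := by
    constructor
    rintro ⟨i, a⟩ (h | ⟨a', b', hadj, h1, h2⟩)
    · exact h rfl
    · cases h1
      cases h2
      exact (G i).loopless.irrefl _ hadj

/-- The strong product of two simple graphs. -/
def strongProd {V W : Type*} (G : SimpleGraph V) (H : SimpleGraph W) :
    SimpleGraph (V × W) where
  Adj x y := x ≠ y ∧ (x.1 = y.1 ∨ G.Adj x.1 y.1) ∧ (x.2 = y.2 ∨ H.Adj x.2 y.2)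
  symm := ⟨fun x y ⟨h, h1, h2⟩ =>
    ⟨h.symm, h1.imp Eq.symm (fun h => G.symm.symm _ _ h), h2.imp Eq.symm (fun h => H.symm.symm _ _ h)⟩⟩
  loopless := ⟨fun x ⟨h, _⟩ => h rfl⟩

/-- The strong product of a family of simple graphs. -/
def strongProdFam {ι : Type*} {V : ι → Type*} (G : ∀ i, SimpleGraph (V i)) :
    SimpleGraph (∀ i, V i) where
  Adj x y := x ≠ y ∧ ∀ i, x i = y i ∨ (G i).Adj (x i) (y i)
  symm := ⟨fun x y ⟨h, h'⟩ => ⟨h.symm, fun i => (h' i).imp Eq.symm (fun h => (G i).symm.symm _ _ h)⟩⟩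
  loopless := ⟨fun x ⟨h, _⟩ => h rfl⟩

/-- `p` is a left path in the commuting graph of `S`. -/
def IsLeftPath {S : Type*} [Mul S] {u v : {x : S // x ∉ sgCenter S}}
    (p : (commGraph S).Walk u v) : Prop :=
  p.IsPath ∧ u ≠ v ∧ ∀ w ∈ p.support, (u : S) * (w : S) = (v : S) * (w : S)

/-- The commuting graph of `S` contains a left path. -/
def HasLeftPath (S : Type*) [Mul S] : Prop :=
  ∃ (u v : {x : S // x ∉ sgCenter S}) (p : (commGraph S).Walk u v), IsLeftPath p

/-- The knit degree of `S`: the length of a shortest left path in its commuting graph. -/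
noncomputable def knitDegree (S : Type*) [Mul S] : ℕ :=
  sInf {m | ∃ (u v : {x : S // x ∉ sgCenter S}) (p : (commGraph S).Walk u v),
    IsLeftPath p ∧ p.length = m}

/-- `p` is a *-left path in the extended commuting graph of `S`. -/
def IsStarLeftPath {S : Type*} [Mul S] {u v : S}
    (p : (extCommGraph S).Walk u v) : Prop :=
  p.IsPath ∧ u ≠ v ∧ ∀ w ∈ p.support, u * w = v * w

/-- The extended commuting graph of `S` contains a *-left path. -/
def HasStarLeftPath (S : Type*) [Mul S] : Prop :=
  ∃ (u v : S) (p : (extCommGraph S).Walk u v), IsStarLeftPath p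

/-- The *-knit degree of `S`. -/
noncomputable def starKnitDegree (S : Type*) [Mul S] : ℕ :=
  sInf {m | ∃ (u v : S) (p : (extCommGraph S).Walk u v), IsStarLeftPath p ∧ p.length = m}

/-- The zero-union of a family of semigroups: their disjoint union plus a new zero. -/
def ZeroUnion {n : ℕ} (S : Fin n → Type*) : Type _ := Option (Σ i, S i)

instance {n : ℕ} (S : Fin n → Type*) [∀ i, Mul (S i)] : Mul (ZeroUnion S) where
  mul x y := match x, y with
    | some ⟨i, a⟩, some ⟨j, b⟩ =>
      if h : j = i then some ⟨i, a * (h ▸ b)⟩ else none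
    | _, _ => none

section ZU
variable {n : ℕ} {S : Fin n → Type*} [∀ i, Mul (S i)]

def zu (i : Fin n) (a : S i) : ZeroUnion S := some ⟨i, a⟩

def zuZero : ZeroUnion S := none

lemma zu_mul_same (i : Fin n) (a b : S i) :
    zu i a * zu i b = (zu i (a * b) : ZeroUnion S) := by
  show (if h : i = i then (some ⟨i, a * (h ▸ b)⟩ : Option (Σ i, S i)) else none) = _
  rw [dif_pos rfl]; rfl

lemma zu_mul_ne {i j : Fin n} (h : j ≠ i) (a : S i) (b : S j) :
    zu i a * zu j b = (zuZero : ZeroUnion S) := by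
  show (if h : j = i then (some ⟨i, a * (h ▸ b)⟩ : Option (Σ i, S i)) else none) = _
  rw [dif_neg h]; rfl

lemma zu_zero_mul (y : ZeroUnion S) : (zuZero : ZeroUnion S) * y = zuZero := by
  show (match (none : Option (Σ i, S i)), y with
    | some ⟨i, a⟩, some ⟨j, b⟩ =>
      if h : j = i then (some ⟨i, a * (h ▸ b)⟩ : Option (Σ i, S i)) else none
    | _, _ => none) = _
  cases (y : Option (Σ i, S i)) <;> rfl

lemma zu_mul_zero (x : ZeroUnion S) : x * (zuZero : ZeroUnion S) = zuZero := by
  show (match x, (none : Option (Σ i, S i)) with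
    | some ⟨i, a⟩, some ⟨j, b⟩ =>
      if h : j = i then (some ⟨i, a * (h ▸ b)⟩ : Option (Σ i, S i)) else none
    | _, _ => none) = _
  cases (x : Option (Σ i, S i)) <;> rfl

lemma zu_inj {i : Fin n} {a b : S i} (h : (zu i a : ZeroUnion S) = zu i b) : a = b := by
  have h2 : (⟨i, a⟩ : Σ i, S i) = ⟨i, b⟩ := Option.some_injective _ h
  simpa using h2

lemma zu_fst {i j : Fin n} {a : S i} {b : S j} (h : (zu i a : ZeroUnion S) = zu j b) :
    i = j :=
  congrArg Sigma.fst (Option.some_injective _ h)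

lemma zu_notCenter_iff (i : Fin n) (a : S i) :
    (zu i a : ZeroUnion S) ∉ sgCenter (ZeroUnion S) ↔ ∃ b : S i, a * b ≠ b * a := by
  constructor
  · intro h
    by_contra hc
    push_neg at hc
    apply h
    intro y
    match y with
    | none =>
      show zu i a * zuZero = zuZero * zu i a
      rw [zu_zero_mul, zu_mul_zero]
    | some ⟨j, b⟩ =>
      show zu i a * zu j b = zu j b * zu i a
      by_cases hj : j = i
      · subst hj; rw [zu_mul_same, zu_mul_same, hc]
      · rw [zu_mul_ne hj, zu_mul_ne (fun h' => hj h'.symm)]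
  · rintro ⟨b, hb⟩ h
    have := h (zu i b)
    rw [zu_mul_same, zu_mul_same] at this
    exact hb (zu_inj this)

lemma zu_adj_of_ne {i j : Fin n} (h : i ≠ j) (a : S i) (b : S j)
    (ha : (zu i a : ZeroUnion S) ∉ sgCenter (ZeroUnion S))
    (hb : (zu j b : ZeroUnion S) ∉ sgCenter (ZeroUnion S)) :
    (commGraph (ZeroUnion S)).Adj ⟨zu i a, ha⟩ ⟨zu j b, hb⟩ := by
  refine ⟨fun he => h (zu_fst (congrArg Subtype.val he)), ?_⟩
  show zu i a * zu j b = zu j b * zu i a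
  rw [zu_mul_ne (fun h' => h h'.symm), zu_mul_ne h]

end ZU

section Main
variable {n : ℕ} {S : Fin n → Type*} [∀ i, Mul (S i)]

lemma zu_zero_center : (zuZero : ZeroUnion S) ∈ sgCenter (ZeroUnion S) := by
  intro y
  rw [zu_zero_mul, zu_mul_zero]

lemma zu_vertex (u : {x : ZeroUnion S // x ∉ sgCenter (ZeroUnion S)}) :
    ∃ (i : Fin n) (a : S i), u.val = zu i a := by
  obtain ⟨x, hx⟩ := u
  match x with
  | none => exact absurd zu_zero_center hx
  | some ⟨i, a⟩ => exact ⟨i, a, rfl⟩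

end Main

theorem commGraph_zeroUnion_connected_diam_two {n : ℕ} (S : Fin n → Type*)
    [∀ i, Semigroup (S i)] [∀ i, Fintype (S i)] [∀ i, Nonempty (S i)]
    (NC : Finset (Fin n)) (hNC : ∀ i, i ∈ NC ↔ ¬ ∀ x y : S i, x * y = y * x)
    (h2 : 2 ≤ NC.card) :
    (commGraph (ZeroUnion S)).Connected ∧ (commGraph (ZeroUnion S)).diam = 2 := by
  classical
  obtain ⟨k, hk, l, hl, hkl⟩ := Finset.one_lt_card.mp h2
  have hnc : ∀ m ∈ NC, ∃ a b : S m, a * b ≠ b * a := by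
    intro m hm
    have := (hNC m).mp hm
    push_neg at this
    exact this
  obtain ⟨a, b, hab⟩ := hnc k hk
  have hva : (zu k a : ZeroUnion S) ∉ sgCenter (ZeroUnion S) :=
    (zu_notCenter_iff k a).mpr ⟨b, hab⟩
  have hvb : (zu k b : ZeroUnion S) ∉ sgCenter (ZeroUnion S) :=
    (zu_notCenter_iff k b).mpr ⟨a, fun h => hab h.symm⟩
  -- for every i there is m ∈ NC, m ≠ i, and a noncentral vertex in component m
  have hw : ∀ i : Fin n, ∃ (m : Fin n) (c : S m) (hc : (zu m c : ZeroUnion S) ∉ sgCenter (ZeroUnion S)), m ≠ i := by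
    intro i
    obtain ⟨m, hm, hmi⟩ := Finset.exists_mem_ne h2 i
    obtain ⟨c, d, hcd⟩ := hnc m hm
    exact ⟨m, c, (zu_notCenter_iff m c).mpr ⟨d, hcd⟩, hmi⟩
  have key : ∀ u v : {x : ZeroUnion S // x ∉ sgCenter (ZeroUnion S)},
      (commGraph (ZeroUnion S)).edist u v ≤ 2 := by
    intro u v
    by_cases huv : u = v
    · subst huv; simp [SimpleGraph.edist_self]
    obtain ⟨i, x, hx⟩ := zu_vertex u
    obtain ⟨j, y, hy⟩ := zu_vertex v
    by_cases hij : i = j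
    · subst hij
      obtain ⟨m, c, hc, hmi⟩ := hw i
      have h1 : (commGraph (ZeroUnion S)).Adj u ⟨zu m c, hc⟩ := by
        have := zu_adj_of_ne (fun h => hmi h.symm) x c (hx ▸ u.2) hc
        convert this using 1 <;> exact Subtype.ext hx
      have h2' : (commGraph (ZeroUnion S)).Adj ⟨zu m c, hc⟩ v := by
        have := zu_adj_of_ne hmi c y hc (hy ▸ v.2)
        convert this using 1 <;> exact Subtype.ext hy
      have := SimpleGraph.edist_le (Walk.cons h1 (Walk.cons h2' Walk.nil))
      simpa using this
    · have h1 : (commGraph (ZeroUnion S)).Adj u v := by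
        have := zu_adj_of_ne hij x y (hx ▸ u.2) (hy ▸ v.2)
        convert this using 1 <;> [exact Subtype.ext hx; exact Subtype.ext hy]
      have := SimpleGraph.edist_le (Walk.cons h1 Walk.nil)
      exact le_trans (by simpa using this) one_le_two
  have hpre : (commGraph (ZeroUnion S)).Preconnected := by
    intro u v
    exact SimpleGraph.reachable_of_edist_ne_top
      ((lt_of_le_of_lt (key u v) (lt_top_iff_ne_top.mpr (by decide))).ne)
  have hne' : Nonempty {x : ZeroUnion S // x ∉ sgCenter (ZeroUnion S)} := ⟨⟨zu k a, hva⟩⟩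
  have hconn : (commGraph (ZeroUnion S)).Connected := ⟨hpre⟩
  refine ⟨hconn, ?_⟩
  -- lower bound: zu k a and zu k b are at distance ≥ 2
  have hne : (⟨zu k a, hva⟩ : {x : ZeroUnion S // x ∉ sgCenter (ZeroUnion S)}) ≠ ⟨zu k b, hvb⟩ := by
    intro h
    exact hab (by rw [zu_inj (congrArg Subtype.val h)])
  have hnadj : ¬ (commGraph (ZeroUnion S)).Adj ⟨zu k a, hva⟩ ⟨zu k b, hvb⟩ := by
    rintro ⟨-, h⟩
    rw [zu_mul_same, zu_mul_same] at h
    exact hab (zu_inj h)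
  have h0 : (commGraph (ZeroUnion S)).edist ⟨zu k a, hva⟩ ⟨zu k b, hvb⟩ ≠ 0 := by
    simp only [ne_eq, SimpleGraph.edist_eq_zero_iff]
    exact hne
  have h1 : (commGraph (ZeroUnion S)).edist ⟨zu k a, hva⟩ ⟨zu k b, hvb⟩ ≠ 1 := by
    simp only [ne_eq, SimpleGraph.edist_eq_one_iff_adj]
    exact hnadj
  have hlt : 1 < (commGraph (ZeroUnion S)).edist ⟨zu k a, hva⟩ ⟨zu k b, hvb⟩ :=
    lt_of_le_of_ne (ENat.one_le_iff_ne_zero.mpr h0) (Ne.symm h1)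
  have hge : 2 ≤ (commGraph (ZeroUnion S)).ediam := by
    calc (2 : ℕ∞) = 1 + 1 := by norm_num
    _ ≤ _ := Order.add_one_le_of_lt hlt
    _ ≤ _ := SimpleGraph.edist_le_ediam
  have hle : (commGraph (ZeroUnion S)).ediam ≤ 2 := SimpleGraph.ediam_le_of_edist_le key
  have hed : (commGraph (ZeroUnion S)).ediam = 2 := le_antisymm hle hge
  rw [SimpleGraph.diam, hed]
  rfl
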